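/- Let (Y_1, Y_2, Y_3, …) be an exchangeable sequence of real random variables on a probability space, let r ∈ ℕ, r ≥ 1, and suppose E[|Y_1|^r] < ∞. Let Y_∞ be the almost sure limit of N^{−1}(Y_1 + ⋯ + Y_N) (which exists by the law of large numbers for exchangeable sequences). Then E[Y_∞^r] = E[Y_1 · Y_2 ⋯ Y_r]. -/

import Mathlib

open MeasureTheory Filter Real

/-- A sequence `Y` of real random variables is exchangeable under `P` if its joint law is
invariant under every finitely supported permutation of the indices (equivalently, under every
permutation of the first `N` indices, for every `N`). -/
def IsExchangeable {Ω : Type*} [MeasurableSpace Ω] (P : MeasureTheory.Measure Ω)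
    (Y : ℕ → Ω → ℝ) : Prop :=
  ∀ σ : Equiv.Perm ℕ, {n | σ n ≠ n}.Finite →
    MeasureTheory.Measure.map (fun ω => fun n => Y (σ n) ω) P =
      MeasureTheory.Measure.map (fun ω => fun n => Y n ω) P

/-- Any map injective on an initial segment agrees there with some finitely supported
permutation of `ℕ`. -/
lemma exists_finperm (r : ℕ) (k : ℕ → ℕ) (hk : Set.InjOn k (Set.Iio r)) :
    ∃ σ : Equiv.Perm ℕ, {n | σ n ≠ n}.Finite ∧ ∀ i < r, σ i = k i := by
  induction r with
  | zero => exact ⟨1, by simp, by omega⟩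
  | succ r ih =>
    obtain ⟨σ, hfin, hσ⟩ := ih (hk.mono (fun x hx => lt_trans hx (Nat.lt_succ_self r)))
    set c := σ⁻¹ (k r) with hc
    refine ⟨σ * Equiv.swap r c, ?_, ?_⟩
    · refine Set.Finite.subset (hfin.union (Set.toFinite {r, c})) ?_
      intro n hn
      by_contra hmem
      simp only [Set.mem_union, Set.mem_insert_iff, Set.mem_singleton_iff, not_or] at hmem
      obtain ⟨h1, h2, h3⟩ := hmem
      apply hn
      simp only [Equiv.Perm.mul_apply, Equiv.swap_apply_of_ne_of_ne h2 h3]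
      simpa [Set.mem_setOf_eq, not_not] using h1
    · intro i hi
      rcases Nat.lt_succ_iff_lt_or_eq.mp hi with hi' | rfl
      · have hic : i ≠ c := by
          intro h
          have : σ i = k r := by rw [h, hc]; simp
          rw [hσ i hi'] at this
          have := hk (by exact hi'.trans (Nat.lt_succ_self r) : i ∈ Set.Iio (r+1))
            (Nat.lt_succ_self r) this
          omega
        simp only [Equiv.Perm.mul_apply, Equiv.swap_apply_of_ne_of_ne (Nat.ne_of_lt hi') hic]
        exact hσ i hi'
      · simp [Equiv.Perm.mul_apply, Equiv.swap_apply_left, hc]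

/-- `|∏ aᵢ| ≤ ∑ |aᵢ|^r` for a product over `Fin r`, `r ≥ 1`. -/
lemma abs_prod_le_sum_pow (r : ℕ) (hr : 1 ≤ r) (a : Fin r → ℝ) :
    |∏ i, a i| ≤ ∑ i, |a i| ^ r := by
  have hne : (Finset.univ : Finset (Fin r)).Nonempty := ⟨⟨0, hr⟩, Finset.mem_univ _⟩
  obtain ⟨j, -, hb⟩ := Finset.exists_max_image Finset.univ (fun i => |a i|) hne
  have hb : ∀ i, |a i| ≤ |a j| := fun i => hb i (Finset.mem_univ i)
  calc |∏ i, a i| = ∏ i, |a i| := Finset.abs_prod _ _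
    _ ≤ ∏ _i : Fin r, |a j| :=
        Finset.prod_le_prod (fun i _ => abs_nonneg _) (fun i _ => hb i)
    _ = |a j| ^ r := by rw [Finset.prod_const, Finset.card_univ, Fintype.card_fin]
    _ ≤ ∑ i, |a i| ^ r :=
        Finset.single_le_sum (f := fun i => |a i| ^ r)
          (fun i _ => pow_nonneg (abs_nonneg _) r) (Finset.mem_univ j)

theorem exchangeable_limit_power_eq_product_moment
    {Ω : Type*} [MeasurableSpace Ω] (P : Measure Ω) [IsProbabilityMeasure P]
    (Y : ℕ → Ω → ℝ) (hYmeas : ∀ n, Measurable (Y n))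
    (hexch : IsExchangeable P Y)
    (r : ℕ) (hr : 1 ≤ r)
    (hint : Integrable (fun ω => |Y 0 ω| ^ r) P)
    (Yinf : Ω → ℝ) (hYinfMeas : Measurable Yinf)
    (hlim : ∀ᵐ ω ∂P, Filter.Tendsto (fun N => (∑ k ∈ Finset.range N, Y k ω) / N)
      Filter.atTop (nhds (Yinf ω))) :
    ∫ ω, Yinf ω ^ r ∂P = ∫ ω, ∏ k ∈ Finset.range r, Y k ω ∂P := by
  classical
  -- joint random variable
  have hJmeas : Measurable (fun ω => fun n => Y n ω) :=
    measurable_pi_lambda _ hYmeas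
  have hJσmeas : ∀ σ : Equiv.Perm ℕ, Measurable (fun ω => fun n => Y (σ n) ω) :=
    fun σ => measurable_pi_lambda _ (fun n => hYmeas (σ n))
  have hφ : Measurable fun x : ℝ => |x| ^ r := (measurable_abs.pow_const r)
  -- the Y k are identically distributed
  have lawEq : ∀ k, Measure.map (Y k) P = Measure.map (Y 0) P := by
    intro k
    rcases eq_or_ne k 0 with rfl | hk0
    · rfl
    have hswapfin : {n | Equiv.swap 0 k n ≠ n}.Finite := by
      refine Set.Finite.subset (Set.toFinite {0, k}) ?_
      intro n hn
      by_contra hmem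
      simp only [Set.mem_insert_iff, Set.mem_singleton_iff, not_or] at hmem
      exact hn (Equiv.swap_apply_of_ne_of_ne hmem.1 hmem.2)
    have hσ := hexch (Equiv.swap 0 k) hswapfin
    have h1 : Y k = (fun x : ℕ → ℝ => x 0) ∘ (fun ω n => Y (Equiv.swap 0 k n) ω) := by
      funext ω; simp [Equiv.swap_apply_left]
    have h2 : Y 0 = (fun x : ℕ → ℝ => x 0) ∘ (fun ω => fun n => Y n ω) := rfl
    rw [h1, h2, ← Measure.map_map (measurable_pi_apply 0) (hJσmeas _), hσ,
      Measure.map_map (measurable_pi_apply 0) hJmeas]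
  have intYk : ∀ k, Integrable (fun ω => |Y k ω| ^ r) P := by
    intro k
    have h0 : Integrable (fun x : ℝ => |x| ^ r) (Measure.map (Y 0) P) :=
      (integrable_map_measure hφ.aestronglyMeasurable (hYmeas 0).aemeasurable).mpr hint
    rw [← lawEq k] at h0
    exact (integrable_map_measure hφ.aestronglyMeasurable (hYmeas k).aemeasurable).mp h0
  have intEq : ∀ (φ : ℝ → ℝ), Measurable φ → ∀ k,
      ∫ ω, φ (Y k ω) ∂P = ∫ ω, φ (Y 0 ω) ∂P := by
    intro φ hφ' k
    rw [← integral_map (hYmeas k).aemeasurable hφ'.aestronglyMeasurable, lawEq k,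
      integral_map (hYmeas 0).aemeasurable hφ'.aestronglyMeasurable]
  set C : ℝ := ∫ ω, |Y 0 ω| ^ r ∂P with hCdef
  have hC0 : 0 ≤ C := integral_nonneg (fun ω => pow_nonneg (abs_nonneg _) r)
  have CEq : ∀ k, ∫ ω, |Y k ω| ^ r ∂P = C := fun k => intEq _ hφ k
  set I : ℝ := ∫ ω, ∏ k ∈ Finset.range r, Y k ω ∂P with hIdef
  -- moments of products over distinct indices
  have prodEq : ∀ (k : ℕ → ℕ), Set.InjOn k (Set.Iio r) →
      ∫ ω, ∏ i ∈ Finset.range r, Y (k i) ω ∂P = I := by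
    intro k hk
    obtain ⟨σ, hfin, hσ⟩ := exists_finperm r k hk
    have hF : Measurable (fun x : ℕ → ℝ => ∏ i ∈ Finset.range r, x i) :=
      Finset.measurable_prod _ (fun i _ => measurable_pi_apply i)
    have e1 : (fun ω => ∏ i ∈ Finset.range r, Y (k i) ω)
        = (fun x : ℕ → ℝ => ∏ i ∈ Finset.range r, x i) ∘ (fun ω => fun n => Y (σ n) ω) := by
      funext ω
      simp only [Function.comp_apply]
      exact Finset.prod_congr rfl (fun i hi => by rw [hσ i (Finset.mem_range.mp hi)])
    rw [hIdef]
    calc ∫ ω, ∏ i ∈ Finset.range r, Y (k i) ω ∂P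
        = ∫ ω, ((fun x : ℕ → ℝ => ∏ i ∈ Finset.range r, x i)
            ∘ (fun ω => fun n => Y (σ n) ω)) ω ∂P := by rw [e1]
      _ = ∫ x, (∏ i ∈ Finset.range r, x i) ∂(Measure.map (fun ω => fun n => Y (σ n) ω) P) :=
          (integral_map (hJσmeas σ).aemeasurable hF.aestronglyMeasurable).symm
      _ = ∫ x, (∏ i ∈ Finset.range r, x i) ∂(Measure.map (fun ω => fun n => Y n ω) P) := by
          rw [hexch σ hfin]
      _ = ∫ ω, ∏ i ∈ Finset.range r, Y i ω ∂P :=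
          integral_map hJmeas.aemeasurable hF.aestronglyMeasurable
  -- integrability and bounds for products
  have prodBound : ∀ (p : Fin r → ℕ) (ω : Ω),
      |∏ i, Y (p i) ω| ≤ ∑ i, |Y (p i) ω| ^ r :=
    fun p ω => abs_prod_le_sum_pow r hr (fun i => Y (p i) ω)
  have prodMeas : ∀ p : Fin r → ℕ, Measurable (fun ω => ∏ i, Y (p i) ω) :=
    fun p => Finset.measurable_prod _ (fun i _ => hYmeas (p i))
  have prodInt : ∀ p : Fin r → ℕ, Integrable (fun ω => ∏ i, Y (p i) ω) P := by
    intro p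
    refine Integrable.mono' (integrable_finset_sum (Finset.univ : Finset (Fin r)) (fun i _ => intYk (p i)))
      (prodMeas p).aestronglyMeasurable ?_
    exact Eventually.of_forall (fun ω => by rw [Real.norm_eq_abs]; exact prodBound p ω)
  have prodIntegralBound : ∀ p : Fin r → ℕ,
      |∫ ω, ∏ i, Y (p i) ω ∂P| ≤ r * C := by
    intro p
    calc |∫ ω, ∏ i, Y (p i) ω ∂P| ≤ ∫ ω, |∏ i, Y (p i) ω| ∂P := by
          have := norm_integral_le_integral_norm (μ := P) (fun ω => ∏ i, Y (p i) ω)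
          simpa only [Real.norm_eq_abs] using this
      _ ≤ ∫ ω, ∑ i, |Y (p i) ω| ^ r ∂P := by
          refine integral_mono (prodInt p).abs (integrable_finset_sum _ (fun i _ => intYk (p i)))
            (fun ω => prodBound p ω)
      _ = ∑ i : Fin r, ∫ ω, |Y (p i) ω| ^ r ∂P :=
          integral_finset_sum _ (fun i _ => intYk (p i))
      _ = ∑ _i : Fin r, C := by exact Finset.sum_congr rfl (fun i _ => CEq (p i))
      _ = r * C := by rw [Finset.sum_const, Finset.card_univ, Fintype.card_fin, nsmul_eq_mul]
  have injProd : ∀ p : Fin r → ℕ, Function.Injective p →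
      ∫ ω, ∏ i, Y (p i) ω ∂P = I := by
    intro p hp
    set k : ℕ → ℕ := fun n => if h : n < r then p ⟨n, h⟩ else 0 with hk
    have hkinj : Set.InjOn k (Set.Iio r) := by
      intro a ha b hb hab
      simp only [hk, Set.mem_Iio] at ha hb hab
      rw [dif_pos ha, dif_pos hb] at hab
      simpa using congrArg Fin.val (hp hab)
    have := prodEq k hkinj
    rw [← this]
    congr 1
    funext ω
    rw [← Fin.prod_univ_eq_prod_range (fun i => Y (k i) ω) r]
    refine Finset.prod_congr rfl (fun i _ => ?_)
    simp [hk, i.isLt]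
  -- the averages and their powers
  set g : ℕ → Ω → ℝ := fun N ω => ((∑ k ∈ Finset.range N, Y k ω) / N) ^ r with hg
  have gmeas : ∀ N, Measurable (g N) := by
    intro N
    exact ((Finset.measurable_sum _ (fun k _ => hYmeas k)).div_const _).pow_const r
  -- expansion of the integral of g N
  have hIgN : ∀ N : ℕ, ∫ ω, g N ω ∂P =
      ((N : ℝ)⁻¹) ^ r * ∑ p : Fin r → Fin N, ∫ ω, ∏ i, Y ((p i : ℕ)) ω ∂P := by
    intro N
    have hexp : ∀ ω, g N ω = ((N : ℝ)⁻¹) ^ r * ∑ p : Fin r → Fin N, ∏ i, Y ((p i : ℕ)) ω := by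
      intro ω
      rw [hg]
      simp only
      rw [div_eq_inv_mul, mul_pow, ← Fin.sum_univ_eq_sum_range (fun k => Y k ω) N]
      congr 1
      have h2 := Finset.prod_univ_sum (fun _ : Fin r => (Finset.univ : Finset (Fin N)))
        (fun _ j => Y (j : ℕ) ω)
      rw [Fintype.piFinset_univ] at h2
      rw [← h2, Finset.prod_const, Finset.card_univ, Fintype.card_fin]
    calc ∫ ω, g N ω ∂P
        = ∫ ω, ((N : ℝ)⁻¹) ^ r * ∑ p : Fin r → Fin N, ∏ i, Y ((p i : ℕ)) ω ∂P :=
          integral_congr_ae (Eventually.of_forall hexp)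
      _ = ((N : ℝ)⁻¹) ^ r * ∫ ω, ∑ p : Fin r → Fin N, ∏ i, Y ((p i : ℕ)) ω ∂P :=
          integral_const_mul _ _
      _ = ((N : ℝ)⁻¹) ^ r * ∑ p : Fin r → Fin N, ∫ ω, ∏ i, Y ((p i : ℕ)) ω ∂P := by
          rw [integral_finset_sum _ (fun p _ => prodInt (fun i => ((p i : ℕ))))]
  -- counting injections
  have cardInj : ∀ N, (Finset.univ.filter
      (fun p : Fin r → Fin N => Function.Injective p)).card = N.descFactorial r := by
    intro N
    rw [← Fintype.card_subtype, Fintype.card_congr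
      (Equiv.subtypeInjectiveEquivEmbedding (Fin r) (Fin N)),
      Fintype.card_embedding_eq, Fintype.card_fin, Fintype.card_fin]
  have hq : Tendsto (fun N : ℕ => (N.descFactorial r : ℝ) / (N : ℝ) ^ r) atTop (nhds 1) := by
    have hev : ∀ᶠ N : ℕ in atTop, (∏ i ∈ Finset.range r, (1 - (i : ℝ) / (N : ℝ)))
        = (N.descFactorial r : ℝ) / (N : ℝ) ^ r := by
      filter_upwards [eventually_ge_atTop r, eventually_ge_atTop 1] with N hN hN1
      have hN0 : (N : ℝ) ≠ 0 := by
        have : (0 : ℝ) < N := by exact_mod_cast hN1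
        exact this.ne'
      rw [Nat.descFactorial_eq_prod_range, Nat.cast_prod]
      have hNr : (N : ℝ) ^ r = ∏ _i ∈ Finset.range r, (N : ℝ) := by
        rw [Finset.prod_const, Finset.card_range]
      rw [hNr, ← Finset.prod_div_distrib]
      refine Finset.prod_congr rfl (fun i hi => ?_)
      have hiN : i ≤ N := le_trans (Finset.mem_range.mp hi).le hN
      rw [Nat.cast_sub hiN, sub_div, div_self hN0]
    have hlim1 : Tendsto (fun N : ℕ => ∏ i ∈ Finset.range r, (1 - (i : ℝ) / (N : ℝ))) atTop
        (nhds (∏ _i ∈ Finset.range r, (1 : ℝ))) := by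
      refine tendsto_finset_prod _ (fun i _ => ?_)
      have h1 := tendsto_const_div_atTop_nhds_zero_nat (i : ℝ)
      have h2 := (tendsto_const_nhds (α := ℕ) (f := atTop) (x := (1 : ℝ))).sub h1
      simpa using h2
    rw [Finset.prod_const_one] at hlim1
    exact Tendsto.congr' hev hlim1
  -- the integrals of g N converge to I
  have hIntC : Tendsto (fun N => ∫ ω, g N ω ∂P) atTop (nhds I) := by
    have hD : ∀ N : ℕ, (∑ p : Fin r → Fin N, ∫ ω, ∏ i, Y ((p i : ℕ)) ω ∂P)
        = (N.descFactorial r : ℝ) * I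
          + ∑ p ∈ Finset.univ.filter (fun p : Fin r → Fin N => ¬ Function.Injective p),
              ∫ ω, ∏ i, Y ((p i : ℕ)) ω ∂P := by
      intro N
      rw [← Finset.sum_filter_add_sum_filter_not Finset.univ
        (fun p : Fin r → Fin N => Function.Injective p)]
      congr 1
      have hc : ∀ p ∈ Finset.univ.filter (fun p : Fin r → Fin N => Function.Injective p),
          ∫ ω, ∏ i, Y ((p i : ℕ)) ω ∂P = I := by
        intro p hp
        exact injProd _ (Fin.val_injective.comp (Finset.mem_filter.mp hp).2)
      rw [Finset.sum_congr rfl hc, Finset.sum_const, cardInj, nsmul_eq_mul]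
    have hcard : ∀ N : ℕ, ((Finset.univ.filter
        (fun p : Fin r → Fin N => ¬ Function.Injective p)).card : ℝ)
        = (N : ℝ) ^ r - (N.descFactorial r : ℝ) := by
      intro N
      have h1 := Finset.card_filter_add_card_filter_not
        (s := (Finset.univ : Finset (Fin r → Fin N)))
        (p := fun p => Function.Injective p)
      rw [cardInj, Finset.card_univ] at h1
      have h2 : Fintype.card (Fin r → Fin N) = N ^ r := by
        rw [Fintype.card_fun, Fintype.card_fin, Fintype.card_fin]
      rw [h2] at h1
      have h3 : (Finset.univ.filter (fun p : Fin r → Fin N => ¬ Function.Injective p)).card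
          = N ^ r - N.descFactorial r := by omega
      rw [h3, Nat.cast_sub (Nat.descFactorial_le_pow N r), Nat.cast_pow]
    have key : ∀ᶠ N : ℕ in atTop, ‖(∫ ω, g N ω ∂P) - I‖
        ≤ (1 - (N.descFactorial r : ℝ) / (N : ℝ) ^ r) * (|I| + r * C) := by
      filter_upwards [eventually_ge_atTop 1] with N hN1
      have hNpos' : (0 : ℝ) < (N : ℝ) := by exact_mod_cast hN1
      have hNpos : (0 : ℝ) < (N : ℝ) ^ r := by positivity
      have hdesc : (N.descFactorial r : ℝ) ≤ (N : ℝ) ^ r := by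
        rw [← Nat.cast_pow]
        exact_mod_cast Nat.descFactorial_le_pow N r
      have hq1 : (N.descFactorial r : ℝ) / (N : ℝ) ^ r ≤ 1 := by
        rw [div_le_one hNpos]
        exact hdesc
      have hE : |∑ p ∈ Finset.univ.filter (fun p : Fin r → Fin N => ¬ Function.Injective p),
          ∫ ω, ∏ i, Y ((p i : ℕ)) ω ∂P| ≤ ((N : ℝ) ^ r - (N.descFactorial r : ℝ)) * (r * C) := by
        calc |∑ p ∈ Finset.univ.filter (fun p : Fin r → Fin N => ¬ Function.Injective p),
              ∫ ω, ∏ i, Y ((p i : ℕ)) ω ∂P|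
            ≤ ∑ p ∈ Finset.univ.filter (fun p : Fin r → Fin N => ¬ Function.Injective p),
              |∫ ω, ∏ i, Y ((p i : ℕ)) ω ∂P| := Finset.abs_sum_le_sum_abs _ _
          _ ≤ ∑ _p ∈ Finset.univ.filter (fun p : Fin r → Fin N => ¬ Function.Injective p),
              (r * C : ℝ) := Finset.sum_le_sum (fun p _ => prodIntegralBound _)
          _ = ((Finset.univ.filter (fun p : Fin r → Fin N => ¬ Function.Injective p)).card : ℝ)
              * (r * C) := by rw [Finset.sum_const, nsmul_eq_mul]
          _ = ((N : ℝ) ^ r - (N.descFactorial r : ℝ)) * (r * C) := by rw [hcard N]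
      rw [hIgN N, hD N, Real.norm_eq_abs]
      set E := ∑ p ∈ Finset.univ.filter (fun p : Fin r → Fin N => ¬ Function.Injective p),
          ∫ ω, ∏ i, Y ((p i : ℕ)) ω ∂P with hEdef
      have step : ((N : ℝ)⁻¹) ^ r * ((N.descFactorial r : ℝ) * I + E) - I
          = ((N.descFactorial r : ℝ) / (N : ℝ) ^ r - 1) * I + ((N : ℝ) ^ r)⁻¹ * E := by
        rw [inv_pow]
        field_simp
        ring
      rw [step]
      calc |((N.descFactorial r : ℝ) / (N : ℝ) ^ r - 1) * I + ((N : ℝ) ^ r)⁻¹ * E|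
          ≤ |((N.descFactorial r : ℝ) / (N : ℝ) ^ r - 1) * I| + |((N : ℝ) ^ r)⁻¹ * E| :=
            abs_add_le _ _
        _ = (1 - (N.descFactorial r : ℝ) / (N : ℝ) ^ r) * |I| + ((N : ℝ) ^ r)⁻¹ * |E| := by
            rw [abs_mul, abs_mul, abs_of_nonneg (inv_nonneg.mpr hNpos.le),
              abs_sub_comm, abs_of_nonneg (sub_nonneg.mpr hq1)]
        _ ≤ (1 - (N.descFactorial r : ℝ) / (N : ℝ) ^ r) * |I|
            + ((N : ℝ) ^ r)⁻¹ * (((N : ℝ) ^ r - (N.descFactorial r : ℝ)) * (r * C)) := by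
            gcongr
        _ = (1 - (N.descFactorial r : ℝ) / (N : ℝ) ^ r) * (|I| + r * C) := by
            field_simp
    have h0 : Tendsto (fun N => (∫ ω, g N ω ∂P) - I) atTop (nhds 0) := by
      refine squeeze_zero_norm' key ?_
      have h1 := ((tendsto_const_nhds (α := ℕ) (f := atTop) (x := (1 : ℝ))).sub hq).mul_const
        (|I| + r * C)
      simpa using h1
    have h2 := h0.add_const I
    simpa using h2
  -- uniform integrability machinery
  set A : ℕ → Ω → ℝ := fun N ω => (∑ k ∈ Finset.range N, |Y k ω| ^ r) / N with hA
  have hgA : ∀ N, ∀ ω : Ω, |g N ω| ≤ A N ω := by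
    intro N ω
    rcases Nat.eq_zero_or_pos N with rfl | hN
    · simp [hg, hA, zero_pow (show r ≠ 0 by omega)]
    obtain ⟨m, hm⟩ : ∃ m, r = m + 1 := ⟨r - 1, by omega⟩
    have hNpos : (0 : ℝ) < N := by exact_mod_cast hN
    have h1 : |g N ω| = |∑ k ∈ Finset.range N, Y k ω| ^ r / (N : ℝ) ^ r := by
      rw [hg]
      simp only
      rw [abs_pow, abs_div, Nat.abs_cast, div_pow]
    have h2 : |∑ k ∈ Finset.range N, Y k ω| ≤ ∑ k ∈ Finset.range N, |Y k ω| :=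
      Finset.abs_sum_le_sum_abs _ _
    have h3 : |∑ k ∈ Finset.range N, Y k ω| ^ r ≤ (∑ k ∈ Finset.range N, |Y k ω|) ^ r :=
      pow_le_pow_left₀ (abs_nonneg _) h2 r
    have h4 := pow_sum_div_card_le_sum_pow (s := Finset.range N)
      (f := fun k => |Y k ω|) (fun k _ => abs_nonneg _) m
    rw [Finset.card_range, ← hm] at h4
    have h5 : (∑ k ∈ Finset.range N, |Y k ω|) ^ r / (N : ℝ) ^ r
        ≤ (∑ k ∈ Finset.range N, |Y k ω| ^ r) / (N : ℝ) := by
      have hNr : (N : ℝ) ^ r = (N : ℝ) ^ m * (N : ℝ) := by rw [hm, pow_succ]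
      rw [hNr, ← div_div]
      gcongr
    rw [h1]
    refine le_trans ?_ h5
    gcongr
  have hAint : ∀ N, Integrable (A N) P :=
    fun N => (integrable_finset_sum _ (fun k _ => intYk k)).div_const _
  have hAnonneg : ∀ N ω, 0 ≤ A N ω := by
    intro N ω
    exact div_nonneg (Finset.sum_nonneg (fun k _ => pow_nonneg (abs_nonneg _) r)) (Nat.cast_nonneg N)
  have hAmeas : ∀ N, Measurable (A N) :=
    fun N => (Finset.measurable_sum _ (fun k _ => (hYmeas k).abs.pow_const r)).div_const _
  have hAC : ∀ N, 1 ≤ N → ∫ ω, A N ω ∂P = C := by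
    intro N hN
    rw [hA]
    simp only
    rw [integral_div, integral_finset_sum _ (fun k _ => intYk k)]
    rw [Finset.sum_congr rfl (fun k _ => CEq k), Finset.sum_const, Finset.card_range,
      nsmul_eq_mul]
    field_simp
  -- key uniform-integrability estimate
  have keyEst : ∀ ε : ℝ, 0 < ε → ∃ δ : ℝ, 0 < δ ∧ ∀ (k : ℕ) (s : Set Ω), MeasurableSet s →
      P s ≤ ENNReal.ofReal δ → ∫ ω in s, |Y k ω| ^ r ∂P ≤ ε := by
    intro ε hε
    set ψ : ℕ → ℝ → ℝ := fun M x => if (M : ℝ) ≤ |x| ^ r then |x| ^ r else 0 with hψdef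
    have hψmeas : ∀ M, Measurable (ψ M) := fun M =>
      Measurable.ite (measurableSet_le measurable_const hφ) hφ measurable_const
    have hψnonneg : ∀ M x, 0 ≤ ψ M x := by
      intro M x
      rw [hψdef]
      dsimp only
      split <;> positivity
    have hψle : ∀ M x, ψ M x ≤ |x| ^ r := by
      intro M x
      rw [hψdef]
      dsimp only
      split
      · exact le_refl _
      · positivity
    have hψint : ∀ M k, Integrable (fun ω => ψ M (Y k ω)) P := fun M k =>
      Integrable.mono' (intYk k) ((hψmeas M).comp (hYmeas k)).aestronglyMeasurable
        (Eventually.of_forall fun ω => by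
          rw [Real.norm_eq_abs, abs_of_nonneg (hψnonneg _ _)]
          exact hψle _ _)
    have htail : Tendsto (fun M => ∫ ω, ψ M (Y 0 ω) ∂P) atTop (nhds 0) := by
      have hptw : ∀ ω : Ω, Tendsto (fun M : ℕ => ψ M (Y 0 ω)) atTop (nhds 0) := by
        intro ω
        refine Tendsto.congr' ?_ tendsto_const_nhds
        filter_upwards [eventually_gt_atTop ⌈|Y 0 ω| ^ r⌉₊] with M hM
        rw [hψdef]
        dsimp only
        rw [if_neg]
        push_neg
        exact lt_of_le_of_lt (Nat.le_ceil _) (by exact_mod_cast hM)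
      have := tendsto_integral_of_dominated_convergence (μ := P)
        (F := fun M ω => ψ M (Y 0 ω)) (f := fun _ => (0 : ℝ)) (fun ω => |Y 0 ω| ^ r)
        (fun M => ((hψmeas M).comp (hYmeas 0)).aestronglyMeasurable) hint
        (fun M => Eventually.of_forall fun ω => by
          rw [Real.norm_eq_abs, abs_of_nonneg (hψnonneg _ _)]
          exact hψle _ _)
        (Eventually.of_forall hptw)
      simpa using this
    obtain ⟨M, hM⟩ := (htail.eventually (gt_mem_nhds (half_pos hε))).exists
    refine ⟨ε / (2 * (M + 1)), by positivity, fun k s hs hPs => ?_⟩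
    have hPs' : (P s).toReal ≤ ε / (2 * (M + 1)) :=
      ENNReal.toReal_le_of_le_ofReal (by positivity) hPs
    have hb1 : ∀ ω, |Y k ω| ^ r ≤ (M : ℝ) + ψ M (Y k ω) := by
      intro ω
      rw [hψdef]
      dsimp only
      split
      · exact le_add_of_nonneg_left (Nat.cast_nonneg M)
      · next h =>
          push_neg at h
          linarith [h.le]
    have int1 : Integrable (fun ω => (M : ℝ) + ψ M (Y k ω)) (P.restrict s) :=
      ((integrable_const _).add (hψint M k)).restrict
    calc ∫ ω in s, |Y k ω| ^ r ∂P ≤ ∫ ω in s, ((M : ℝ) + ψ M (Y k ω)) ∂P :=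
          integral_mono ((intYk k).restrict) int1 hb1
      _ = (M : ℝ) * (P s).toReal + ∫ ω in s, ψ M (Y k ω) ∂P := by
          rw [integral_add (integrable_const _) ((hψint M k).restrict), integral_const,
            measureReal_restrict_apply_univ, measureReal_def, smul_eq_mul, mul_comm]
      _ ≤ (M : ℝ) * (ε / (2 * (M + 1))) + ε / 2 := by
          refine add_le_add (mul_le_mul_of_nonneg_left hPs' (Nat.cast_nonneg M)) ?_
          calc ∫ ω in s, ψ M (Y k ω) ∂P ≤ ∫ ω, ψ M (Y k ω) ∂P :=
                setIntegral_le_integral (hψint M k) (Eventually.of_forall fun ω => hψnonneg _ _)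
            _ = ∫ ω, ψ M (Y 0 ω) ∂P := intEq (ψ M) (hψmeas M) k
            _ ≤ ε / 2 := hM.le
      _ ≤ ε := by
          have h1 : (M : ℝ) * (ε / (2 * (M + 1))) ≤ ε / 2 := by
            have hM1 : (M : ℝ) ≤ (M : ℝ) + 1 := by linarith
            calc (M : ℝ) * (ε / (2 * (M + 1))) ≤ ((M : ℝ) + 1) * (ε / (2 * (M + 1))) := by
                  have : (0:ℝ) ≤ ε / (2 * (M + 1)) := by positivity
                  nlinarith
              _ = ε / 2 := by
                  have : (M : ℝ) + 1 ≠ 0 := by positivity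
                  field_simp
          linarith
  have hUI : UnifIntegrable g 1 P := by
    intro ε hε
    obtain ⟨δ, hδ, hkey⟩ := keyEst ε hε
    refine ⟨δ, hδ, fun N s hs hPs => ?_⟩
    have hSet : ∫ ω in s, A N ω ∂P ≤ ε := by
      rcases Nat.eq_zero_or_pos N with rfl | hN
      · have : A 0 = fun _ => (0 : ℝ) := by
          funext ω
          rw [hA]
          simp
        rw [this]
        simp only [integral_zero]
        exact hε.le
      have hNpos : (0 : ℝ) < N := by exact_mod_cast hN
      have hform : ∫ ω in s, A N ω ∂P
          = (∑ k ∈ Finset.range N, ∫ ω in s, |Y k ω| ^ r ∂P) / N := by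
        rw [hA]
        simp only
        rw [integral_div, integral_finset_sum _ (fun k _ => (intYk k).restrict)]
      rw [hform]
      have hsum : ∑ k ∈ Finset.range N, ∫ ω in s, |Y k ω| ^ r ∂P ≤ N * ε := by
        calc ∑ k ∈ Finset.range N, ∫ ω in s, |Y k ω| ^ r ∂P
            ≤ ∑ _k ∈ Finset.range N, ε := Finset.sum_le_sum (fun k _ => hkey k s hs hPs)
          _ = N * ε := by rw [Finset.sum_const, Finset.card_range, nsmul_eq_mul]
      calc (∑ k ∈ Finset.range N, ∫ ω in s, |Y k ω| ^ r ∂P) / N ≤ (N * ε) / N := by gcongr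
        _ = ε := by field_simp
    calc eLpNorm (s.indicator (g N)) 1 P = ∫⁻ ω, ‖s.indicator (g N) ω‖₊ ∂P :=
          eLpNorm_one_eq_lintegral_enorm
      _ ≤ ∫⁻ ω, ENNReal.ofReal (s.indicator (A N) ω) ∂P := by
          refine lintegral_mono (fun ω => ?_)
          rw [← ENNReal.ofReal_coe_nnreal, coe_nnnorm, Real.norm_eq_abs]
          refine ENNReal.ofReal_le_ofReal ?_
          by_cases hω : ω ∈ s
          · simp only [Set.indicator_of_mem hω]
            exact hgA N ω
          · simp [Set.indicator_of_notMem hω]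
      _ = ENNReal.ofReal (∫ ω, s.indicator (A N) ω ∂P) :=
          (ofReal_integral_eq_lintegral_ofReal ((hAint N).indicator hs)
            (Eventually.of_forall fun ω =>
              Set.indicator_nonneg (fun ω' _ => hAnonneg N ω') ω)).symm
      _ ≤ ENNReal.ofReal ε := ENNReal.ofReal_le_ofReal
          (by rw [integral_indicator hs]; exact hSet)
  have hptwise : ∀ᵐ ω ∂P, Tendsto (fun N => g N ω) atTop (nhds (Yinf ω ^ r)) :=
    hlim.mono (fun ω h => h.pow r)
  have hYinfInt : Integrable (fun ω => Yinf ω ^ r) P := by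
    refine ⟨(hYinfMeas.pow_const r).aestronglyMeasurable, ?_⟩
    have hmeasN : ∀ N, Measurable fun ω => (‖g N ω‖₊ : ENNReal) :=
      fun N => (gmeas N).nnnorm.coe_nnreal_ennreal
    have hae : ∀ᵐ ω ∂P, (‖Yinf ω ^ r‖₊ : ENNReal)
        = Filter.liminf (fun N => (‖g N ω‖₊ : ENNReal)) atTop := by
      filter_upwards [hptwise] with ω hω
      exact ((ENNReal.tendsto_coe.mpr hω.nnnorm).liminf_eq).symm
    have hboundN : ∀ N, 1 ≤ N → ∫⁻ ω, (‖g N ω‖₊ : ENNReal) ∂P ≤ ENNReal.ofReal C := by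
      intro N hN
      calc ∫⁻ ω, (‖g N ω‖₊ : ENNReal) ∂P ≤ ∫⁻ ω, ENNReal.ofReal (A N ω) ∂P := by
            refine lintegral_mono fun ω => ?_
            rw [← ENNReal.ofReal_coe_nnreal, coe_nnnorm, Real.norm_eq_abs]
            exact ENNReal.ofReal_le_ofReal (hgA N ω)
        _ = ENNReal.ofReal (∫ ω, A N ω ∂P) :=
            (ofReal_integral_eq_lintegral_ofReal (hAint N)
              (Eventually.of_forall (hAnonneg N))).symm
        _ = ENNReal.ofReal C := by rw [hAC N hN]
    have hfin : ∫⁻ ω, (‖Yinf ω ^ r‖₊ : ENNReal) ∂P ≤ ENNReal.ofReal C := by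
      calc ∫⁻ ω, (‖Yinf ω ^ r‖₊ : ENNReal) ∂P
          = ∫⁻ ω, Filter.liminf (fun N => (‖g N ω‖₊ : ENNReal)) atTop ∂P :=
            lintegral_congr_ae hae
        _ ≤ Filter.liminf (fun N => ∫⁻ ω, (‖g N ω‖₊ : ENNReal) ∂P) atTop :=
            lintegral_liminf_le hmeasN
        _ ≤ Filter.liminf (fun _ : ℕ => ENNReal.ofReal C) atTop := by
            refine Filter.liminf_le_liminf ?_
            exact eventually_atTop.mpr ⟨1, hboundN⟩
        _ = ENNReal.ofReal C := Filter.liminf_const _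
    exact lt_of_le_of_lt hfin ENNReal.ofReal_lt_top
  have gInt : ∀ N, Integrable (g N) P := by
    intro N
    refine Integrable.mono' (hAint N) (gmeas N).aestronglyMeasurable
      (Eventually.of_forall fun ω => ?_)
    rw [Real.norm_eq_abs]
    exact hgA N ω
  have hL1 := tendsto_Lp_finite_of_tendsto_ae (le_refl (1 : ENNReal)) ENNReal.one_ne_top
    (fun N => (gmeas N).aestronglyMeasurable) (memLp_one_iff_integrable.mpr hYinfInt)
    hUI hptwise
  have hInt2 : Tendsto (fun N => ∫ ω, g N ω ∂P) atTop (nhds (∫ ω, Yinf ω ^ r ∂P)) := by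
    refine tendsto_integral_of_L1 _ hYinfInt.aestronglyMeasurable (Eventually.of_forall gInt) ?_
    have : ∀ N, (∫⁻ ω, ‖g N ω - Yinf ω ^ r‖ₑ ∂P) = eLpNorm (g N - fun ω => Yinf ω ^ r) 1 P := by
      intro N
      rw [eLpNorm_one_eq_lintegral_enorm]
      rfl
    simp only [this]
    exact hL1
  exact tendsto_nhds_unique hInt2 hIntC
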